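/- Let λ, M, N be real numbers with λ ≠ 0, let 0 < T < ∞, and let u, v : [0, T) → ℝ be differentiable functions satisfying u'(t) = 2λ²·u(t)·(v(t) − (M−N)²) and v'(t) = 2λ²·v(t)·(u(t) − (M+N)²) for all t ∈ [0, T), together with u(0) > 0, v(0) > 0 and u(0)·v(0) > u(0)·(M−N)² + v(0)·(M+N)². If the solution blows up at time T, i.e. at least one of u, v is unbounded on [0, T), then both u(t) → +∞ and v(t) → +∞ as t → T⁻, and the ratio u(t)/v(t) → 1 as t → T⁻. -/
import Mathlib


open Filter

section Aux

open Set Real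

/-- Generic strict monotonicity from positive derivative within `Ico 0 T`. -/
lemma aux_strictMono {T : ℝ} {u g : ℝ → ℝ}
    (hu : ∀ t ∈ Set.Ico (0 : ℝ) T, HasDerivWithinAt u (g t) (Set.Ico 0 T) t)
    (hg : ∀ t ∈ Set.Ico (0 : ℝ) T, 0 < g t) :
    StrictMonoOn u (Set.Ico 0 T) := by
  apply strictMonoOn_of_deriv_pos (convex_Ico 0 T)
  · exact fun t ht => (hu t ht).continuousWithinAt
  · intro x hx
    rw [interior_Ico] at hx
    have hxI : x ∈ Set.Ico (0 : ℝ) T := ⟨hx.1.le, hx.2⟩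
    have hmem : Set.Ico (0 : ℝ) T ∈ nhds x :=
      mem_of_superset (Ioo_mem_nhds hx.1 hx.2) Set.Ioo_subset_Ico_self
    have hd : HasDerivAt u (g x) x := ((hu x hxI).hasDerivAt hmem)
    rw [hd.deriv]
    exact hg x hxI

/-- Key positivity lemma: `u > b` and `v > a` persist on `[0, T)`. -/
lemma aux_pos {c a b T : ℝ} {u v : ℝ → ℝ} (hc : 0 < c) (ha : 0 ≤ a) (hb : 0 ≤ b)
    (hu : ∀ t ∈ Set.Ico (0 : ℝ) T, HasDerivWithinAt u (c * u t * (v t - a)) (Set.Ico 0 T) t)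
    (hv : ∀ t ∈ Set.Ico (0 : ℝ) T, HasDerivWithinAt v (c * v t * (u t - b)) (Set.Ico 0 T) t)
    (hu0 : b < u 0) (hv0 : a < v 0) :
    ∀ t ∈ Set.Ico (0 : ℝ) T, b < u t ∧ a < v t := by
  intro t₀ ht₀
  by_contra hcon
  -- the "bad" set
  set f : ℝ → ℝ := fun t => min (u t - b) (v t - a) with hf
  have hft₀ : f t₀ ≤ 0 := by
    rcases not_and_or.1 hcon with h | h
    · exact min_le_of_left_le (by push_neg at h; linarith)
    · exact min_le_of_right_le (by push_neg at h; linarith)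
  have hsub : Set.Icc (0 : ℝ) t₀ ⊆ Set.Ico 0 T :=
    fun x hx => ⟨hx.1, lt_of_le_of_lt hx.2 ht₀.2⟩
  have hcu' : ContinuousOn u (Set.Ico 0 T) := fun t ht => (hu t ht).continuousWithinAt
  have hcv' : ContinuousOn v (Set.Ico 0 T) := fun t ht => (hv t ht).continuousWithinAt
  have hcu : ContinuousOn u (Set.Icc 0 t₀) := hcu'.mono hsub
  have hcv : ContinuousOn v (Set.Icc 0 t₀) := hcv'.mono hsub
  have hcf : ContinuousOn f (Set.Icc 0 t₀) :=
    (hcu.sub continuousOn_const).inf (hcv.sub continuousOn_const)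
  set Z : Set ℝ := Set.Icc 0 t₀ ∩ f ⁻¹' Set.Iic 0 with hZ
  have hZc : IsClosed Z := hcf.preimage_isClosed_of_isClosed isClosed_Icc isClosed_Iic
  have hZne : Z.Nonempty := ⟨t₀, ⟨ht₀.1, le_refl _⟩, hft₀⟩
  have hZbd : BddBelow Z := ⟨0, fun x hx => hx.1.1⟩
  set s := sInf Z with hs
  have hsZ : s ∈ Z := hZc.csInf_mem hZne hZbd
  have hs0 : 0 ≤ s := hsZ.1.1
  have hst₀ : s ≤ t₀ := hsZ.1.2
  have hsT : s < T := lt_of_le_of_lt hst₀ ht₀.2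
  have hfs : f s ≤ 0 := hsZ.2
  have hf0 : 0 < f 0 := lt_min (by linarith) (by linarith)
  have hspos : 0 < s := by
    rcases lt_or_eq_of_le hs0 with h | h
    · exact h
    · exfalso; rw [← h] at hfs; linarith
  -- before s, everything is fine
  have hprev : ∀ x, 0 ≤ x → x < s → b < u x ∧ a < v x := by
    intro x hx0 hxs
    have hxZ : x ∉ Z := fun hmem => absurd (csInf_le hZbd hmem) (not_le.2 hxs)
    have hxIcc : x ∈ Set.Icc (0 : ℝ) t₀ := ⟨hx0, le_trans hxs.le hst₀⟩
    have : ¬ f x ≤ 0 := fun hle => hxZ ⟨hxIcc, hle⟩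
    push_neg at this
    constructor
    · have := lt_of_lt_of_le this (min_le_left _ _); linarith
    · have := lt_of_lt_of_le this (min_le_right _ _); linarith
  have hsubs : Set.Icc (0 : ℝ) s ⊆ Set.Ico 0 T :=
    fun x hx => ⟨hx.1, lt_of_le_of_lt hx.2 hsT⟩
  -- u strictly monotone on [0, s]
  have hmono : ∀ (w g : ℝ → ℝ),
      (∀ t ∈ Set.Ico (0 : ℝ) T, HasDerivWithinAt w (g t) (Set.Ico 0 T) t) →
      (∀ x, 0 < x → x < s → 0 < g x) → StrictMonoOn w (Set.Icc 0 s) := by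
    intro w g hw hgpos
    apply strictMonoOn_of_deriv_pos (convex_Icc 0 s)
    · exact ContinuousOn.mono (fun t ht => (hw t ht).continuousWithinAt : ContinuousOn w (Set.Ico 0 T)) hsubs
    · intro x hx
      rw [interior_Icc] at hx
      have hxI : x ∈ Set.Ico (0 : ℝ) T := ⟨hx.1.le, lt_trans hx.2 hsT⟩
      have hmem : Set.Ico (0 : ℝ) T ∈ nhds x :=
        mem_of_superset (Ioo_mem_nhds hx.1 (lt_trans hx.2 hsT)) Set.Ioo_subset_Ico_self
      have hd : HasDerivAt w (g x) x := ((hw x hxI).hasDerivAt hmem)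
      rw [hd.deriv]
      exact hgpos x hx.1 hx.2
  have hmu : StrictMonoOn u (Set.Icc 0 s) := by
    apply hmono u _ hu
    intro x hx0 hxs
    obtain ⟨h1, h2⟩ := hprev x hx0.le hxs
    have : 0 < u x := lt_of_le_of_lt hb h1
    have : 0 < v x - a := by linarith
    positivity
  have hmv : StrictMonoOn v (Set.Icc 0 s) := by
    apply hmono v _ hv
    intro x hx0 hxs
    obtain ⟨h1, h2⟩ := hprev x hx0.le hxs
    have : 0 < v x := lt_of_le_of_lt ha h2
    have : 0 < u x - b := by linarith
    positivity
  have h1 : u 0 < u s := hmu ⟨le_refl 0, hs0⟩ ⟨hs0, le_refl s⟩ hspos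
  have h2 : v 0 < v s := hmv ⟨le_refl 0, hs0⟩ ⟨hs0, le_refl s⟩ hspos
  have : 0 < f s := lt_min (by linarith) (by linarith)
  linarith

/-- Grönwall-type boundedness: if `v` is bounded, so is `u`. -/
lemma aux_gronwall {c a C T : ℝ} {u v : ℝ → ℝ} (hc : 0 < c) (hT : 0 < T)
    (hu : ∀ t ∈ Set.Ico (0 : ℝ) T, HasDerivWithinAt u (c * u t * (v t - a)) (Set.Ico 0 T) t)
    (hupos : ∀ t ∈ Set.Ico (0 : ℝ) T, 0 ≤ u t)
    (hvbd : ∀ t ∈ Set.Ico (0 : ℝ) T, |v t| ≤ C) :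
    ∀ t ∈ Set.Ico (0 : ℝ) T, u t ≤ |u 0| * Real.exp (c * (C + |a|) * T) := by
  have hC0 : 0 ≤ C := le_trans (abs_nonneg _) (hvbd 0 ⟨le_refl _, hT⟩)
  set K := c * (C + |a|) with hK
  have hK0 : 0 ≤ K := by positivity
  intro t ht
  have hsub : Set.Icc (0 : ℝ) t ⊆ Set.Ico 0 T := fun x hx => ⟨hx.1, lt_of_le_of_lt hx.2 ht.2⟩
  have hbnd := norm_le_gronwallBound_of_norm_deriv_right_le
      (f := u) (f' := fun x => c * u x * (v x - a)) (δ := ‖u 0‖) (K := K) (ε := 0)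
      (a := 0) (b := t)
      (ContinuousOn.mono (fun s hs => (hu s hs).continuousWithinAt : ContinuousOn u (Set.Ico 0 T)) hsub)
      (fun x hx => by
        have hxI : x ∈ Set.Ico (0 : ℝ) T := ⟨hx.1, lt_of_lt_of_le hx.2 ht.2.le⟩
        refine (hu x hxI).mono_of_mem_nhdsWithin ?_
        refine mem_of_superset (inter_mem_nhdsWithin _ (Iio_mem_nhds hxI.2)) ?_
        exact fun y hy => ⟨le_trans hxI.1 hy.1, hy.2⟩)
      (le_refl _)
      (fun x hx => by
        have hxI : x ∈ Set.Ico (0 : ℝ) T := ⟨hx.1, lt_of_lt_of_le hx.2 ht.2.le⟩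
        have h1 : 0 ≤ u x := hupos x hxI
        have h2 : |v x - a| ≤ C + |a| := by
          calc |v x - a| ≤ |v x| + |a| := abs_sub _ _
            _ ≤ C + |a| := by linarith [hvbd x hxI]
        rw [Real.norm_eq_abs, Real.norm_eq_abs, abs_mul, abs_mul, abs_of_pos hc,
          abs_of_nonneg h1, add_zero, hK]
        calc c * u x * |v x - a| ≤ c * u x * (C + |a|) := by
              apply mul_le_mul_of_nonneg_left h2 (by positivity)
          _ = c * (C + |a|) * u x := by ring
      )
  have := hbnd t ⟨ht.1, le_refl _⟩
  rw [sub_zero, gronwallBound_ε0, Real.norm_eq_abs] at this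
  calc u t ≤ |u t| := le_abs_self _
    _ ≤ |u 0| * Real.exp (K * t) := this
    _ ≤ |u 0| * Real.exp (K * T) := by
        apply mul_le_mul_of_nonneg_left _ (abs_nonneg _)
        exact Real.exp_le_exp.2 (mul_le_mul_of_nonneg_left ht.2.le hK0)

/-- Monotone unbounded implies tendsto atTop at the right endpoint. -/
lemma aux_tendsto_atTop {T : ℝ} {u : ℝ → ℝ}
    (hmono : MonotoneOn u (Set.Ico 0 T))
    (hunb : ∀ C : ℝ, ∃ t ∈ Set.Ico (0 : ℝ) T, C < u t) :
    Tendsto u (nhdsWithin T (Set.Iio T)) atTop := by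
  rw [tendsto_atTop]
  intro C
  obtain ⟨t₀, ht₀, hC⟩ := hunb C
  filter_upwards [Ioo_mem_nhdsLT_of_mem (Set.mem_Ioc.2 ⟨ht₀.2, le_refl T⟩)] with t ht
  have htI : t ∈ Set.Ico (0 : ℝ) T := ⟨le_trans ht₀.1 ht.1.le, ht.2⟩
  exact hC.le.trans (hmono ht₀ htI ht.1.le)

/-- First integral: `u - v - b log u + a log v` is constant. -/
lemma aux_integral {c a b T : ℝ} {u v : ℝ → ℝ} (hT : 0 < T)
    (hu : ∀ t ∈ Set.Ico (0 : ℝ) T, HasDerivWithinAt u (c * u t * (v t - a)) (Set.Ico 0 T) t)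
    (hv : ∀ t ∈ Set.Ico (0 : ℝ) T, HasDerivWithinAt v (c * v t * (u t - b)) (Set.Ico 0 T) t)
    (hupos : ∀ t ∈ Set.Ico (0 : ℝ) T, 0 < u t)
    (hvpos : ∀ t ∈ Set.Ico (0 : ℝ) T, 0 < v t) :
    ∀ t ∈ Set.Ico (0 : ℝ) T,
      u t - v t - b * Real.log (u t) + a * Real.log (v t)
        = u 0 - v 0 - b * Real.log (u 0) + a * Real.log (v 0) := by
  set F : ℝ → ℝ := fun t => u t - v t - b * Real.log (u t) + a * Real.log (v t) with hF
  intro t ht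
  have hsub : Set.Icc (0 : ℝ) t ⊆ Set.Ico 0 T := fun x hx => ⟨hx.1, lt_of_le_of_lt hx.2 ht.2⟩
  have hcu : ContinuousOn u (Set.Icc 0 t) :=
    ContinuousOn.mono (fun s hs => (hu s hs).continuousWithinAt : ContinuousOn u (Set.Ico 0 T)) hsub
  have hcv : ContinuousOn v (Set.Icc 0 t) :=
    ContinuousOn.mono (fun s hs => (hv s hs).continuousWithinAt : ContinuousOn v (Set.Ico 0 T)) hsub
  have hcont : ContinuousOn F (Set.Icc 0 t) := by
    apply ContinuousOn.add
    · apply ContinuousOn.sub (hcu.sub hcv)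
      exact continuousOn_const.mul (hcu.log (fun x hx => (hupos x (hsub hx)).ne'))
    · exact continuousOn_const.mul (hcv.log (fun x hx => (hvpos x (hsub hx)).ne'))
  have hderiv : ∀ x ∈ Set.Ico (0 : ℝ) t, HasDerivWithinAt F 0 (Set.Ici x) x := by
    intro x hx
    have hxI : x ∈ Set.Ico (0 : ℝ) T := ⟨hx.1, lt_of_lt_of_le hx.2 ht.2.le⟩
    have hux : 0 < u x := hupos x hxI
    have hvx : 0 < v x := hvpos x hxI
    have hdu := hu x hxI
    have hdv := hv x hxI
    have hlu : HasDerivWithinAt (fun s => Real.log (u s))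
        ((u x)⁻¹ * (c * u x * (v x - a))) (Set.Ico 0 T) x :=
      (Real.hasDerivAt_log hux.ne').comp_hasDerivWithinAt x hdu
    have hlv : HasDerivWithinAt (fun s => Real.log (v s))
        ((v x)⁻¹ * (c * v x * (u x - b))) (Set.Ico 0 T) x :=
      (Real.hasDerivAt_log hvx.ne').comp_hasDerivWithinAt x hdv
    have hd : HasDerivWithinAt F
        (c * u x * (v x - a) - c * v x * (u x - b)
          - b * ((u x)⁻¹ * (c * u x * (v x - a)))
          + a * ((v x)⁻¹ * (c * v x * (u x - b)))) (Set.Ico 0 T) x :=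
      ((hdu.sub hdv).sub ((hlu.const_mul b))).add ((hlv.const_mul a))
    have heq : c * u x * (v x - a) - c * v x * (u x - b)
          - b * ((u x)⁻¹ * (c * u x * (v x - a)))
          + a * ((v x)⁻¹ * (c * v x * (u x - b))) = 0 := by
      field_simp
      ring
    rw [heq] at hd
    refine hd.mono_of_mem_nhdsWithin ?_
    refine mem_of_superset (inter_mem_nhdsWithin _ (Iio_mem_nhds hxI.2)) ?_
    exact fun y hy => ⟨le_trans hxI.1 hy.1, hy.2⟩
  exact constant_of_has_deriv_right_zero hcont hderiv t ⟨ht.1, le_refl _⟩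

end Aux

/-- Let λ ≠ 0, 0 < T < ∞, and let u, v solve u' = 2λ²·u·(v − (M−N)²),
v' = 2λ²·v·(u − (M+N)²) on [0, T) with u(0) > 0, v(0) > 0 and
u(0)·v(0) > u(0)·(M−N)² + v(0)·(M+N)². If at least one of u, v is unbounded on [0, T),
then u(t) → +∞, v(t) → +∞ and u(t)/v(t) → 1 as t → T⁻. -/
theorem stmt_19 (lam M N : ℝ) (hlam : lam ≠ 0) (T : ℝ) (hT : 0 < T)
    (u v : ℝ → ℝ)
    (hu : ∀ t ∈ Set.Ico (0 : ℝ) T,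
      HasDerivWithinAt u (2 * lam ^ 2 * u t * (v t - (M - N) ^ 2)) (Set.Ico 0 T) t)
    (hv : ∀ t ∈ Set.Ico (0 : ℝ) T,
      HasDerivWithinAt v (2 * lam ^ 2 * v t * (u t - (M + N) ^ 2)) (Set.Ico 0 T) t)
    (hu0 : 0 < u 0) (hv0 : 0 < v 0)
    (hinit : u 0 * (M - N) ^ 2 + v 0 * (M + N) ^ 2 < u 0 * v 0)
    (hblow : ¬ (∃ C : ℝ, ∀ t ∈ Set.Ico (0 : ℝ) T, |u t| ≤ C) ∨
      ¬ (∃ C : ℝ, ∀ t ∈ Set.Ico (0 : ℝ) T, |v t| ≤ C)) :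
    Tendsto u (nhdsWithin T (Set.Iio T)) atTop ∧
      Tendsto v (nhdsWithin T (Set.Iio T)) atTop ∧
      Tendsto (fun t => u t / v t) (nhdsWithin T (Set.Iio T)) (nhds 1) := by
  set c : ℝ := 2 * lam ^ 2 with hc_def
  set a : ℝ := (M - N) ^ 2 with ha_def
  set b : ℝ := (M + N) ^ 2 with hb_def
  have hc : 0 < c := by positivity
  have ha : 0 ≤ a := sq_nonneg _
  have hb : 0 ≤ b := sq_nonneg _
  have hu0b : b < u 0 := by nlinarith
  have hv0a : a < v 0 := by nlinarith
  have hpos := aux_pos hc ha hb hu hv hu0b hv0a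
  have hupos : ∀ t ∈ Set.Ico (0 : ℝ) T, 0 < u t :=
    fun t ht => lt_of_le_of_lt hb (hpos t ht).1
  have hvpos : ∀ t ∈ Set.Ico (0 : ℝ) T, 0 < v t :=
    fun t ht => lt_of_le_of_lt ha (hpos t ht).2
  have humono : StrictMonoOn u (Set.Ico 0 T) := by
    apply aux_strictMono hu
    intro t ht
    have h1 := hupos t ht
    have h2 := (hpos t ht).2
    have : 0 < v t - a := by linarith
    positivity
  have hvmono : StrictMonoOn v (Set.Ico 0 T) := by
    apply aux_strictMono hv
    intro t ht
    have h1 := hvpos t ht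
    have h2 := (hpos t ht).1
    have : 0 < u t - b := by linarith
    positivity
  -- both unbounded
  have hunb : (∀ C : ℝ, ∃ t ∈ Set.Ico (0 : ℝ) T, C < u t) ∧
      (∀ C : ℝ, ∃ t ∈ Set.Ico (0 : ℝ) T, C < v t) := by
    have habs_u : ∀ C : ℝ, (∃ t ∈ Set.Ico (0 : ℝ) T, C < |u t|) →
        ∃ t ∈ Set.Ico (0 : ℝ) T, C < u t := by
      rintro C ⟨t, ht, hC⟩
      exact ⟨t, ht, by rwa [abs_of_pos (hupos t ht)] at hC⟩
    have habs_v : ∀ C : ℝ, (∃ t ∈ Set.Ico (0 : ℝ) T, C < |v t|) →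
        ∃ t ∈ Set.Ico (0 : ℝ) T, C < v t := by
      rintro C ⟨t, ht, hC⟩
      exact ⟨t, ht, by rwa [abs_of_pos (hvpos t ht)] at hC⟩
    -- if v bounded then u bounded
    have himp : ∀ C : ℝ, (∀ t ∈ Set.Ico (0 : ℝ) T, v t ≤ C) →
        ∃ C' : ℝ, ∀ t ∈ Set.Ico (0 : ℝ) T, |u t| ≤ C' := by
      intro C hC
      have hvbd : ∀ t ∈ Set.Ico (0 : ℝ) T, |v t| ≤ C :=
        fun t ht => by rw [abs_of_pos (hvpos t ht)]; exact hC t ht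
      refine ⟨|u 0| * Real.exp (c * (C + |a|) * T), fun t ht => ?_⟩
      rw [abs_of_pos (hupos t ht)]
      exact aux_gronwall hc hT hu (fun s hs => (hupos s hs).le) hvbd t ht
    have himp' : ∀ C : ℝ, (∀ t ∈ Set.Ico (0 : ℝ) T, u t ≤ C) →
        ∃ C' : ℝ, ∀ t ∈ Set.Ico (0 : ℝ) T, |v t| ≤ C' := by
      intro C hC
      have hubd : ∀ t ∈ Set.Ico (0 : ℝ) T, |u t| ≤ C :=
        fun t ht => by rw [abs_of_pos (hupos t ht)]; exact hC t ht
      refine ⟨|v 0| * Real.exp (c * (C + |b|) * T), fun t ht => ?_⟩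
      rw [abs_of_pos (hvpos t ht)]
      exact aux_gronwall hc hT hv (fun s hs => (hvpos s hs).le) hubd t ht
    rcases hblow with h | h
    · push_neg at h
      have hUunb : ∀ C : ℝ, ∃ t ∈ Set.Ico (0 : ℝ) T, C < u t := fun C => habs_u C (h C)
      refine ⟨hUunb, fun C => habs_v C ?_⟩
      by_contra hcon
      push_neg at hcon
      obtain ⟨C', hC'⟩ := himp C (fun t ht => (le_abs_self _).trans (hcon t ht))
      obtain ⟨t, ht, hgt⟩ := hUunb C'
      exact absurd (le_trans (le_abs_self _) (hC' t ht)) (not_le.2 hgt)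
    · push_neg at h
      have hVunb : ∀ C : ℝ, ∃ t ∈ Set.Ico (0 : ℝ) T, C < v t := fun C => habs_v C (h C)
      refine ⟨fun C => habs_u C ?_, hVunb⟩
      by_contra hcon
      push_neg at hcon
      obtain ⟨C', hC'⟩ := himp' C (fun t ht => (le_abs_self _).trans (hcon t ht))
      obtain ⟨t, ht, hgt⟩ := hVunb C'
      exact absurd (le_trans (le_abs_self _) (hC' t ht)) (not_le.2 hgt)
  have huT : Tendsto u (nhdsWithin T (Set.Iio T)) atTop :=
    aux_tendsto_atTop humono.monotoneOn hunb.1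
  have hvT : Tendsto v (nhdsWithin T (Set.Iio T)) atTop :=
    aux_tendsto_atTop hvmono.monotoneOn hunb.2
  refine ⟨huT, hvT, ?_⟩
  -- ratio
  set K : ℝ := u 0 - v 0 - b * Real.log (u 0) + a * Real.log (v 0) with hK_def
  have hK : ∀ t ∈ Set.Ico (0 : ℝ) T,
      u t - v t = K + b * Real.log (u t) - a * Real.log (v t) := by
    intro t ht
    have := aux_integral hT hu hv hupos hvpos t ht
    linarith
  set l := nhdsWithin T (Set.Iio T) with hl_def
  have E1 : ∀ᶠ t in l, t ∈ Set.Ico (0 : ℝ) T := by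
    filter_upwards [Ioo_mem_nhdsLT_of_mem (Set.mem_Ioc.2 ⟨hT, le_refl T⟩)] with t ht
    exact ⟨ht.1.le, ht.2⟩
  have E2 : ∀ᶠ t in l, (1 : ℝ) ≤ u t := huT.eventually_ge_atTop 1
  have E3 : ∀ᶠ t in l, (1 : ℝ) ≤ v t := hvT.eventually_ge_atTop 1
  have E4 : ∀ᶠ t in l, 2 * |K| ≤ v t := hvT.eventually_ge_atTop _
  have hlog_div : Tendsto (fun x : ℝ => Real.log x / x) atTop (nhds 0) := by
    have := Real.isLittleO_log_id_atTop.tendsto_div_nhds_zero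
    simpa using this
  have hlogu_u : Tendsto (fun t => b * (Real.log (u t) / u t)) l (nhds (b * 0)) :=
    (hlog_div.comp huT).const_mul b
  rw [mul_zero] at hlogu_u
  have E5 : ∀ᶠ t in l, b * Real.log (u t) ≤ u t / 2 := by
    filter_upwards [hlogu_u.eventually_lt_const (by norm_num : (0:ℝ) < 1/2), E2] with t h1 h2
    have hu1 : 0 < u t := by linarith
    have := mul_le_mul_of_nonneg_right h1.le hu1.le
    have heq : b * (Real.log (u t) / u t) * u t = b * Real.log (u t) := by
      field_simp
    rw [heq] at this
    linarith
  have EU : ∀ᶠ t in l, u t ≤ 3 * v t := by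
    filter_upwards [E1, E3, E4, E5] with t ht h3 h4 h5
    have hKt := hK t ht
    have hlogv : 0 ≤ Real.log (v t) := Real.log_nonneg h3
    have h6 : 0 ≤ a * Real.log (v t) := mul_nonneg ha hlogv
    have h7 : K ≤ |K| := le_abs_self K
    linarith
  have ELog : ∀ᶠ t in l, Real.log (u t) ≤ Real.log 3 + Real.log (v t) := by
    filter_upwards [EU, E2, E3] with t h1 h2 h3
    have hut : 0 < u t := by linarith
    have hvt : 0 < v t := by linarith
    calc Real.log (u t) ≤ Real.log (3 * v t) :=
          Real.log_le_log (by positivity) h1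
      _ = Real.log 3 + Real.log (v t) := Real.log_mul (by norm_num) hvt.ne'
  have hv_inv : Tendsto (fun t => (v t)⁻¹) l (nhds 0) :=
    tendsto_inv_atTop_zero.comp hvT
  have hlogv_v : Tendsto (fun t => Real.log (v t) / v t) l (nhds 0) := hlog_div.comp hvT
  have hlogu_v : Tendsto (fun t => Real.log (u t) / v t) l (nhds 0) := by
    have hupper : Tendsto (fun t => Real.log 3 * (v t)⁻¹ + Real.log (v t) / v t) l
        (nhds (Real.log 3 * 0 + 0)) := (hv_inv.const_mul _).add hlogv_v
    rw [mul_zero, add_zero] at hupper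
    apply tendsto_of_tendsto_of_tendsto_of_le_of_le' tendsto_const_nhds hupper
    · filter_upwards [E2, E3] with t h2 h3
      exact div_nonneg (Real.log_nonneg h2) (by linarith)
    · filter_upwards [ELog, E3] with t h1 h3
      have hvt : 0 < v t := by linarith
      calc Real.log (u t) / v t ≤ (Real.log 3 + Real.log (v t)) / v t := by gcongr
        _ = Real.log 3 * (v t)⁻¹ + Real.log (v t) / v t := by
            rw [add_div, div_eq_mul_inv]
  have hfinal : Tendsto (fun t => 1 + (K * (v t)⁻¹ + (b * (Real.log (u t) / v t)
      - a * (Real.log (v t) / v t)))) l (nhds (1 + (K * 0 + (b * 0 - a * 0)))) := by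
    exact tendsto_const_nhds.add (((hv_inv.const_mul K)).add
      ((hlogu_v.const_mul b).sub (hlogv_v.const_mul a)))
  rw [show (1 : ℝ) + (K * 0 + (b * 0 - a * 0)) = 1 by ring] at hfinal
  apply hfinal.congr'
  filter_upwards [E1, E3] with t ht h3
  have hvt : 0 < v t := by linarith
  have hKt := hK t ht
  field_simp
  linarith [mul_comm (u t) (v t)]
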